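/- Let k ≥ 4 and let H⃗ be any orientation of the cycle C_k. Then for any two edges e, f of C_k and any orientation of e and f, this partial orientation extends to an orientation of C_k containing no copy of H⃗ (i.e., not isomorphic to H⃗ as a digraph). -/

import Mathlib

/-- The arc relation of the orientation of the cycle on `Fin m` encoded by
`σ : Fin m → Bool`: the edge `{i, i+1}` is directed `i → i+1` if `σ i = true`,
and `i+1 → i` otherwise. -/
def cycleArc {m : ℕ} [NeZero m] (σ : Fin m → Bool) (i j : Fin m) : Prop :=
  (j = i + 1 ∧ σ i = true) ∨ (i = j + 1 ∧ σ j = false)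

open Fin.CommRing in
lemma cycle_copy_count (n : ℕ) (σ τ : Fin (n+4) → Bool) (g : Fin (n+4) → Fin (n+4))
    (hg : Function.Injective g)
    (h : ∀ i j, cycleArc σ i j → cycleArc τ (g i) (g j)) :
    (∑ v, (τ v).toNat) = (∑ i, (σ i).toNat) ∨
    (∑ v, (τ v).toNat) + (∑ i, (σ i).toNat) = n + 4 := by
  have two_ne : (2 : Fin (n+4)) ≠ 0 := by
    intro hh
    have := congrArg Fin.val hh
    simp [Fin.val_two] at this
    rw [Nat.mod_eq_of_lt (by omega)] at this
    omega
  have step1 : ∀ i : Fin (n+4), g (i+1) = g i + 1 ∨ g (i+1) = g i - 1 := by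
    intro i
    cases hσ : σ i with
    | true =>
      rcases h i (i+1) (Or.inl ⟨rfl, hσ⟩) with ⟨h1, _⟩ | ⟨h1, _⟩
      · exact Or.inl h1
      · right; rw [h1]; ring
    | false =>
      rcases h (i+1) i (Or.inr ⟨rfl, hσ⟩) with ⟨h1, _⟩ | ⟨h1, _⟩
      · right; rw [h1]; ring
      · exact Or.inl h1
  have step2 : ∀ i : Fin (n+4), g (i+1) = g i + 1 → g (i+1+1) = g (i+1) + 1 := by
    intro i hi
    rcases step1 (i+1) with h2 | h2
    · exact h2
    · exfalso
      have : g (i+1+1) = g i := by rw [h2, hi]; ring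
      have := hg this
      have h0 : (2 : Fin (n+4)) = 0 := by linear_combination this
      exact two_ne h0
  have step2' : ∀ i : Fin (n+4), g (i+1) = g i - 1 → g (i+1+1) = g (i+1) - 1 := by
    intro i hi
    rcases step1 (i+1) with h2 | h2
    · exfalso
      have : g (i+1+1) = g i := by rw [h2, hi]; ring
      have := hg this
      have h0 : (2 : Fin (n+4)) = 0 := by linear_combination this
      exact two_ne h0
    · exact h2
  rcases step1 0 with base | base
  · -- rotation case
    have chain : ∀ k : ℕ, g ((k : Fin (n+4)) + 1) = g (k : Fin (n+4)) + 1 := by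
      intro k
      induction k with
      | zero => simpa using base
      | succ k ih =>
        have e : ((k+1 : ℕ) : Fin (n+4)) = (k : Fin (n+4)) + 1 := by push_cast; ring
        rw [e]
        exact step2 _ ih
    have lin : ∀ k : ℕ, g (k : Fin (n+4)) = g 0 + k := by
      intro k
      induction k with
      | zero => simp
      | succ k ih =>
        have e : ((k+1 : ℕ) : Fin (n+4)) = (k : Fin (n+4)) + 1 := by push_cast; ring
        rw [e, chain k, ih]
        push_cast; ring
    have lin' : ∀ i : Fin (n+4), g i = g 0 + i := by
      intro i
      have := lin i.val
      rwa [Fin.cast_val_eq_self] at this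
    have vals : ∀ i, τ (g 0 + i) = σ i := by
      intro i
      cases hσ : σ i with
      | true =>
        have hh := h i (i+1) (Or.inl ⟨rfl, hσ⟩)
        rw [lin' i, lin' (i+1)] at hh
        rcases hh with ⟨_, h2⟩ | ⟨h1, _⟩
        · exact h2
        · exact absurd (by linear_combination -h1 : (2 : Fin (n+4)) = 0) two_ne
      | false =>
        have hh := h (i+1) i (Or.inr ⟨rfl, hσ⟩)
        rw [lin' i, lin' (i+1)] at hh
        rcases hh with ⟨h1, _⟩ | ⟨_, h2⟩
        · exact absurd (by linear_combination -h1 : (2 : Fin (n+4)) = 0) two_ne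
        · exact h2
    left
    calc ∑ v, (τ v).toNat = ∑ i, (τ (g 0 + i)).toNat :=
          (Fintype.sum_equiv (Equiv.addLeft (g 0)) _ _ (fun i => rfl)).symm
      _ = ∑ i, (σ i).toNat := Finset.sum_congr rfl (fun i _ => by rw [vals])
  · -- reflection case
    have chain : ∀ k : ℕ, g ((k : Fin (n+4)) + 1) = g (k : Fin (n+4)) - 1 := by
      intro k
      induction k with
      | zero => simpa using base
      | succ k ih =>
        have e : ((k+1 : ℕ) : Fin (n+4)) = (k : Fin (n+4)) + 1 := by push_cast; ring
        rw [e]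
        exact step2' _ ih
    have lin : ∀ k : ℕ, g (k : Fin (n+4)) = g 0 - k := by
      intro k
      induction k with
      | zero => simp
      | succ k ih =>
        have e : ((k+1 : ℕ) : Fin (n+4)) = (k : Fin (n+4)) + 1 := by push_cast; ring
        rw [e, chain k, ih]
        push_cast; ring
    have lin' : ∀ i : Fin (n+4), g i = g 0 - i := by
      intro i
      have := lin i.val
      rwa [Fin.cast_val_eq_self] at this
    have vals : ∀ i, τ (g 0 - (i+1)) = !σ i := by
      intro i
      cases hσ : σ i with
      | true =>
        have hh := h i (i+1) (Or.inl ⟨rfl, hσ⟩)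
        rw [lin' i, lin' (i+1)] at hh
        rcases hh with ⟨h1, _⟩ | ⟨_, h2⟩
        · exact absurd (by linear_combination -h1 : (2 : Fin (n+4)) = 0) two_ne
        · rw [h2]; rfl
      | false =>
        have hh := h (i+1) i (Or.inr ⟨rfl, hσ⟩)
        rw [lin' i, lin' (i+1)] at hh
        rcases hh with ⟨_, h2⟩ | ⟨h1, _⟩
        · rw [h2]; rfl
        · exact absurd (by linear_combination -h1 : (2 : Fin (n+4)) = 0) two_ne
    right
    have e1 : ∑ v, (τ v).toNat = ∑ i, (!σ i).toNat := by
      calc ∑ v, (τ v).toNat = ∑ i, (τ (g 0 - (i+1))).toNat :=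
            (Fintype.sum_equiv ((Equiv.addRight 1).trans (Equiv.subLeft (g 0))) _ _
              (fun i => rfl)).symm
        _ = ∑ i, (!σ i).toNat := Finset.sum_congr rfl (fun i _ => by rw [vals])
    rw [e1, ← Finset.sum_add_distrib]
    have e2 : ∀ i : Fin (n+4), (!σ i).toNat + (σ i).toNat = 1 := by
      intro i; cases σ i <;> rfl
    simp [e2]

/-- Let `k = n + 4 ≥ 4` and let `H⃗` be any orientation of the cycle
`C_k` (encoded by `σ`).  For any two (distinct) edges of `C_k` (indexed by
`i₁ ≠ i₂`, edge `i` being `{i, i+1}`) and any orientation of them (the Booleans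
`b₁, b₂`), this partial orientation extends to an orientation `τ` of `C_k`
containing no copy of `H⃗`, i.e. no injective map sending arcs of `σ` to arcs of
`τ`. -/
theorem cycle_two_ramsey_avoidable (n : ℕ) (σ : Fin (n + 4) → Bool)
    (i₁ i₂ : Fin (n + 4)) (h12 : i₁ ≠ i₂) (b₁ b₂ : Bool) :
    ∃ τ : Fin (n + 4) → Bool, τ i₁ = b₁ ∧ τ i₂ = b₂ ∧
      ¬ ∃ g : Fin (n + 4) → Fin (n + 4), Function.Injective g ∧
        ∀ i j, cycleArc σ i j → cycleArc τ (g i) (g j) := by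
  have hcard : 1 < (({i₁, i₂} : Finset (Fin (n+4)))ᶜ).card := by
    have h2 : ({i₁, i₂} : Finset (Fin (n+4))).card ≤ 2 := by
      apply le_trans (Finset.card_insert_le _ _); simp
    rw [Finset.card_compl]
    simp only [Fintype.card_fin]
    omega
  obtain ⟨i₃, h3, i₄, h4, h34⟩ := Finset.one_lt_card.mp hcard
  simp only [Finset.mem_compl, Finset.mem_insert, Finset.mem_singleton, not_or] at h3 h4
  set T := ∑ i, (σ i).toNat with hT
  obtain ⟨c₃, c₄, hc1, hc2⟩ : ∃ c₃ c₄ : Bool,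
      b₁.toNat + b₂.toNat + c₃.toNat + c₄.toNat ≠ T ∧
      b₁.toNat + b₂.toNat + c₃.toNat + c₄.toNat + T ≠ n + 4 := by
    by_cases h0 : b₁.toNat + b₂.toNat ≠ T ∧ b₁.toNat + b₂.toNat + T ≠ n + 4
    · exact ⟨false, false, by simpa using h0.1, by simpa using h0.2⟩
    by_cases h1 : b₁.toNat + b₂.toNat + 1 ≠ T ∧ b₁.toNat + b₂.toNat + 1 + T ≠ n + 4
    · refine ⟨true, false, ?_, ?_⟩ <;> simp only [Bool.toNat_true, Bool.toNat_false] <;> omega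
    · refine ⟨true, true, ?_, ?_⟩ <;> simp only [Bool.toNat_true, Bool.toNat_false] <;>
        push_neg at h0 h1 <;> omega
  refine ⟨fun v => if v = i₁ then b₁ else if v = i₂ then b₂ else
      if v = i₃ then c₃ else if v = i₄ then c₄ else false, by simp, ?_, ?_⟩
  · simp [Ne.symm h12]
  · rintro ⟨g, hg, harcs⟩
    set τ : Fin (n+4) → Bool := fun v => if v = i₁ then b₁ else if v = i₂ then b₂ else
      if v = i₃ then c₃ else if v = i₄ then c₄ else false with hτ
    have hTτ : ∑ v, (τ v).toNat = b₁.toNat + b₂.toNat + c₃.toNat + c₄.toNat := by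
      have hsub : ∑ v, (τ v).toNat = ∑ v ∈ ({i₁, i₂, i₃, i₄} : Finset (Fin (n+4))), (τ v).toNat := by
        symm
        apply Finset.sum_subset (Finset.subset_univ _)
        intro x _ hx
        simp only [Finset.mem_insert, Finset.mem_singleton, not_or] at hx
        simp [hτ, hx.1, hx.2.1, hx.2.2.1, hx.2.2.2]
      rw [hsub]
      have d12 : i₁ ≠ i₂ := h12
      have d13 : i₁ ≠ i₃ := Ne.symm h3.1
      have d14 : i₁ ≠ i₄ := Ne.symm h4.1
      have d23 : i₂ ≠ i₃ := Ne.symm h3.2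
      have d24 : i₂ ≠ i₄ := Ne.symm h4.2
      rw [Finset.sum_insert (by simp [d12, d13, d14]),
          Finset.sum_insert (by simp [d23, d24]),
          Finset.sum_insert (by simp [h34])]
      simp [hτ, d12, d13, d14, d23, d24, h34, Ne.symm d12, Ne.symm d13, Ne.symm d14,
        Ne.symm d23, Ne.symm d24, Ne.symm h34]
      ring
    rcases cycle_copy_count n σ τ g hg harcs with hA | hB
    · rw [hTτ] at hA; exact hc1 hA
    · rw [hTτ] at hB; exact hc2 hB
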